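/- When tasks are the strategic entities (each task may hide incident edges but cannot invent them), all three mechanisms M_BFS, M_DFS, and M_AP are truthful: a task that is left unmatched when reporting its full incident edge set remains unmatched under any nonempty subset report, holding other tasks' reports fixed. -/

import Mathlib

open Classical

/-- An edge of the bipartite graph: a pair (agent, task). -/
abbrev Edge (n m : ℕ) := Fin n × Fin m

variable {n m : ℕ}

/-- Number of tasks assigned to agent `i` in the edge set `μ`. -/
def deg (μ : Finset (Edge n m)) (i : Fin n) : ℕ := (μ.filter (fun e => e.1 = i)).card

/-- `μ` is a b-matching over the edge set `E'`: it uses only edges of `E'`, each agent `i`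
receives at most `b i` tasks, and each task is matched to at most one agent. -/
def IsBMatching (b : Fin n → ℕ) (E' μ : Finset (Edge n m)) : Prop :=
  μ ⊆ E' ∧ (∀ i, deg μ i ≤ b i) ∧ ∀ j : Fin m, (μ.filter (fun e => e.2 = j)).card ≤ 1

/-- Weight of a matching: total value of matched tasks. -/
noncomputable def weight (q : Fin m → ℝ) (μ : Finset (Edge n m)) : ℝ := ∑ e ∈ μ, q e.2

/-- Utility of agent `i`: total value of the tasks matched to `i`. -/
noncomputable def util (q : Fin m → ℝ) (i : Fin n) (μ : Finset (Edge n m)) : ℝ :=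
  ∑ e ∈ μ.filter (fun e => e.1 = i), q e.2

/-- `μ` is a maximum vertex-weighted b-matching over the edge set `E'`. -/
def IsMaxMatching (b : Fin n → ℕ) (q : Fin m → ℝ) (E' μ : Finset (Edge n m)) : Prop :=
  IsBMatching b E' μ ∧ ∀ ν, IsBMatching b E' ν → weight q ν ≤ weight q μ

/-- The edges of `E` incident to agent `i`. -/
def agentEdges (E : Finset (Edge n m)) (i : Fin n) : Finset (Edge n m) :=
  E.filter (fun e => e.1 = i)

/-- The edge set obtained from `E` when agent `i` reports `S` instead of its true edges. -/
def deviate (E : Finset (Edge n m)) (i : Fin n) (S : Finset (Edge n m)) : Finset (Edge n m) :=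
  E.filter (fun e => e.1 ≠ i) ∪ S

/-- A valid report of agent `i`: a nonempty subset of its true incident edges. -/
def ValidReport (E : Finset (Edge n m)) (i : Fin n) (S : Finset (Edge n m)) : Prop :=
  S ⊆ agentEdges E i ∧ S.Nonempty
open Classical in
/-- The tasks sorted in non-increasing order of value (ties broken by index). -/
noncomputable def sortedTasks (m : ℕ) (q : Fin m → ℝ) : List (Fin m) :=
  List.insertionSort (fun j k => q k ≤ q j) (List.finRange m)

/-- The greedy mechanism `M_AP`: process tasks in non-increasing value order, assigning each
task to the highest-priority unsaturated agent connected to it, if any. -/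
noncomputable def MAP (b : Fin n → ℕ) (q : Fin m → ℝ) (E' : Finset (Edge n m)) :
    Finset (Edge n m) :=
  (sortedTasks m q).foldl (fun μ j =>
    match (List.finRange n).find? (fun i => decide ((i, j) ∈ E' ∧ deg μ i < b i)) with
    | some i => insert (i, j) μ
    | none => μ) ∅

/-- `p = [(i₁,j₁),…,(i_L,j_L)]` is an augmenting path from task `j = j₁` with respect to the
matching `μ` in the graph `E'`: the edges `(i_ℓ, j_ℓ)` are non-matching edges of `E'`, the
edges `(i_ℓ, j_{ℓ+1})` are matching edges, all interior agents are saturated and the final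
agent is unsaturated. -/
structure IsAugPathFrom (b : Fin n → ℕ) (E' μ : Finset (Edge n m)) (j : Fin m)
    (p : List (Edge n m)) : Prop where
  ne : p ≠ []
  starts : ∀ e ∈ p.head?, e.2 = j
  mem : ∀ e ∈ p, e ∈ E' ∧ e ∉ μ
  matched : ∀ k, (h : k + 1 < p.length) →
    ((p.get ⟨k, Nat.lt_of_succ_lt h⟩).1, (p.get ⟨k + 1, h⟩).2) ∈ μ
  satInterior : ∀ k, (h : k + 1 < p.length) →
    b (p.get ⟨k, Nat.lt_of_succ_lt h⟩).1 ≤ deg μ (p.get ⟨k, Nat.lt_of_succ_lt h⟩).1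
  unsatLast : ∀ e ∈ p.getLast?, deg μ e.1 < b e.1
  agentsNodup : (p.map Prod.fst).Nodup
  tasksNodup : (p.map Prod.snd).Nodup

/-- The matching edges of an augmenting path. -/
def pathMatched (p : List (Edge n m)) : List (Edge n m) :=
  (p.zip p.tail).map (fun ef => (ef.1.1, ef.2.2))

/-- Flip an augmenting path: remove its matching edges and add its non-matching edges. -/
def applyPath (μ : Finset (Edge n m)) (p : List (Edge n m)) : Finset (Edge n m) :=
  (μ \ (pathMatched p).toFinset) ∪ p.toFinset

/-- A numeric key realizing the lexicographic order (by vertex indices) on augmenting paths. -/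
def pathKey (n m : ℕ) (p : List (Edge n m)) : ℕ :=
  ((p.flatMap fun (e : Edge n m) => [e.1.val + 1, e.2.val + 1]) ++
    List.replicate (2 * n - 2 * p.length) 0).foldl (fun a d => a * (n + m + 2) + d) 0

/-- DFS explores agents in priority order and goes deep first: it returns the lexicographically
least augmenting path. -/
def dfsCost (n m : ℕ) (p : List (Edge n m)) : ℕ := pathKey n m p

/-- BFS returns a shortest augmenting path, exploring vertices in priority order: it returns
the lexicographically least augmenting path among those of minimum length. -/
def bfsCost (n m : ℕ) (p : List (Edge n m)) : ℕ :=
  p.length * (n + m + 2) ^ (2 * n + 2) + pathKey n m p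

/-- Select the cost-minimal augmenting path from task `j`, if an augmenting path exists. -/
noncomputable def selectPath (cost : List (Edge n m) → ℕ) (b : Fin n → ℕ)
    (E' μ : Finset (Edge n m)) (j : Fin m) : Option (List (Edge n m)) :=
  if h : ∃ p, IsAugPathFrom b E' μ j p ∧ ∀ p', IsAugPathFrom b E' μ j p' → cost p ≤ cost p'
  then some h.choose else none

/-- The augmenting-path algorithm: process tasks in non-increasing value order, at each step
flipping the augmenting path found by the (deterministic) search given by `cost`. -/
noncomputable def runAug (cost : List (Edge n m) → ℕ) (b : Fin n → ℕ) (q : Fin m → ℝ)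
    (E' : Finset (Edge n m)) : Finset (Edge n m) :=
  (sortedTasks m q).foldl (fun μ j =>
    match selectPath cost b E' μ j with
    | some p => applyPath μ p
    | none => μ) ∅

/-- The maximum vertex-weighted b-matching mechanism using breadth-first search. -/
noncomputable def MBFS (b : Fin n → ℕ) (q : Fin m → ℝ) (E' : Finset (Edge n m)) :
    Finset (Edge n m) := runAug (bfsCost n m) b q E'

/-- The maximum vertex-weighted b-matching mechanism using depth-first search. -/
noncomputable def MDFS (b : Fin n → ℕ) (q : Fin m → ℝ) (E' : Finset (Edge n m)) :
    Finset (Edge n m) := runAug (dfsCost n m) b q E'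
/-- The edges of `E` incident to task `j`. -/
def taskEdges (E : Finset (Edge n m)) (j : Fin m) : Finset (Edge n m) :=
  E.filter (fun e => e.2 = j)

/-- The edge set obtained from `E` when task `j` reports `S` instead of its true edges. -/
def tdeviate (E : Finset (Edge n m)) (j : Fin m) (S : Finset (Edge n m)) :
    Finset (Edge n m) :=
  E.filter (fun e => e.2 ≠ j) ∪ S

/-- Task `j` is matched by `μ`. -/
def taskMatched (μ : Finset (Edge n m)) (j : Fin m) : Prop := ∃ e ∈ μ, e.2 = j

namespace TaskTruthfulAux

variable {n m : ℕ}

lemma tdeviate_subset {E S : Finset (Edge n m)} {j : Fin m} (hS : S ⊆ taskEdges E j) :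
    tdeviate E j S ⊆ E := by
  intro e he
  rcases Finset.mem_union.mp he with h | h
  · exact (Finset.mem_filter.mp h).1
  · exact (Finset.mem_filter.mp (hS h)).1

lemma mem_tdeviate_of_ne {E S : Finset (Edge n m)} {j : Fin m} {e : Edge n m}
    (he : e ∈ E) (hne : e.2 ≠ j) : e ∈ tdeviate E j S :=
  Finset.mem_union_left _ (Finset.mem_filter.mpr ⟨he, hne⟩)

lemma taskMatched_applyPath {μ : Finset (Edge n m)} {p : List (Edge n m)} {k : Fin m}
    (h : taskMatched μ k) : taskMatched (applyPath μ p) k := by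
  obtain ⟨e, he, he2⟩ := h
  by_cases hm : e ∈ (pathMatched p).toFinset
  · rw [List.mem_toFinset, pathMatched, List.mem_map] at hm
    obtain ⟨⟨e1, e2⟩, hef, heq⟩ := hm
    refine ⟨e2, Finset.mem_union_right _ (List.mem_toFinset.mpr
      (List.mem_of_mem_tail (List.of_mem_zip hef).2)), ?_⟩
    have : e2.2 = e.2 := by rw [← heq]
    rw [this, he2]
  · exact ⟨e, Finset.mem_union_left _ (Finset.mem_sdiff.mpr ⟨he, hm⟩), he2⟩

lemma snd_ne_of_mem_path {b : Fin n → ℕ} {E' μ : Finset (Edge n m)} {j' : Fin m}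
    {p : List (Edge n m)} (hp : IsAugPathFrom b E' μ j' p) {j : Fin m}
    (hne : j' ≠ j) (hun : ¬ taskMatched μ j) : ∀ e ∈ p, e.2 ≠ j := by
  intro e he hej
  obtain ⟨⟨k, hk⟩, hgk⟩ := List.mem_iff_get.mp he
  match k, hk with
  | 0, hk =>
    have h0 : p.head? = some e := by
      have hne' : p ≠ [] := hp.ne
      rw [List.head?_eq_head hne']
      congr 1
      rw [← hgk]
      simp [List.get_eq_getElem, List.head_eq_getElem]
    exact hne (by rw [← hp.starts e h0, hej])
  | k + 1, hk =>
    have hmt := hp.matched k hk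
    rw [hgk] at hmt
    rw [hej] at hmt
    exact hun ⟨_, hmt, rfl⟩

lemma aug_iff {b : Fin n → ℕ} {E S μ : Finset (Edge n m)} {j j' : Fin m}
    (hS : S ⊆ taskEdges E j) (hne : j' ≠ j) (hun : ¬ taskMatched μ j)
    (p : List (Edge n m)) :
    IsAugPathFrom b E μ j' p ↔ IsAugPathFrom b (tdeviate E j S) μ j' p := by
  constructor
  · intro hp
    exact ⟨hp.ne, hp.starts,
      fun e he => ⟨mem_tdeviate_of_ne (hp.mem e he).1 (snd_ne_of_mem_path hp hne hun e he),
        (hp.mem e he).2⟩,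
      hp.matched, hp.satInterior, hp.unsatLast, hp.agentsNodup, hp.tasksNodup⟩
  · intro hp
    exact ⟨hp.ne, hp.starts,
      fun e he => ⟨tdeviate_subset hS (hp.mem e he).1, (hp.mem e he).2⟩,
      hp.matched, hp.satInterior, hp.unsatLast, hp.agentsNodup, hp.tasksNodup⟩

lemma aug_of_aug_tdeviate {b : Fin n → ℕ} {E S μ : Finset (Edge n m)} {j j' : Fin m}
    (hS : S ⊆ taskEdges E j) {p : List (Edge n m)}
    (hp : IsAugPathFrom b (tdeviate E j S) μ j' p) : IsAugPathFrom b E μ j' p :=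
  ⟨hp.ne, hp.starts,
    fun e he => ⟨tdeviate_subset hS (hp.mem e he).1, (hp.mem e he).2⟩,
    hp.matched, hp.satInterior, hp.unsatLast, hp.agentsNodup, hp.tasksNodup⟩

lemma selectPath_congr (cost : List (Edge n m) → ℕ) (b : Fin n → ℕ)
    {E1 E2 μ : Finset (Edge n m)} {j : Fin m}
    (h : ∀ p, IsAugPathFrom b E1 μ j p ↔ IsAugPathFrom b E2 μ j p) :
    selectPath cost b E1 μ j = selectPath cost b E2 μ j := by
  have h2 : IsAugPathFrom b E1 μ j = IsAugPathFrom b E2 μ j :=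
    funext fun p => propext (h p)
  unfold selectPath
  rw [h2]

lemma exists_min_cost (cost : List (Edge n m) → ℕ) {b : Fin n → ℕ}
    {E' μ : Finset (Edge n m)} {j : Fin m}
    (h : ∃ p, IsAugPathFrom b E' μ j p) :
    ∃ p, IsAugPathFrom b E' μ j p ∧ ∀ p', IsAugPathFrom b E' μ j p' → cost p ≤ cost p' := by
  obtain ⟨p0, hp0⟩ := h
  have hex : ∃ c, ∃ p, IsAugPathFrom b E' μ j p ∧ cost p = c := ⟨cost p0, p0, hp0, rfl⟩
  obtain ⟨p, hp, hpc⟩ := Nat.find_spec hex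
  exact ⟨p, hp, fun p' hp' =>
    le_trans (le_of_eq hpc) (Nat.find_min' hex ⟨p', hp', rfl⟩)⟩

lemma selectPath_eq_none (cost : List (Edge n m) → ℕ) (b : Fin n → ℕ)
    (E' μ : Finset (Edge n m)) (j : Fin m)
    (h : ¬ ∃ p, IsAugPathFrom b E' μ j p) : selectPath cost b E' μ j = none := by
  unfold selectPath
  rw [dif_neg]
  rintro ⟨p, hp, -⟩
  exact h ⟨p, hp⟩

lemma selectPath_ne_none (cost : List (Edge n m) → ℕ) (b : Fin n → ℕ)
    (E' μ : Finset (Edge n m)) (j : Fin m)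
    (h : ∃ p, IsAugPathFrom b E' μ j p) : selectPath cost b E' μ j ≠ none := by
  unfold selectPath
  rw [dif_pos (exists_min_cost cost h)]
  simp

lemma selectPath_some {cost : List (Edge n m) → ℕ} {b : Fin n → ℕ}
    {E' μ : Finset (Edge n m)} {j : Fin m} {p : List (Edge n m)}
    (h : selectPath cost b E' μ j = some p) : IsAugPathFrom b E' μ j p := by
  unfold selectPath at h
  split at h
  · rename_i hex
    injection h with h
    rw [← h]
    exact hex.choose_spec.1
  · exact absurd h (by simp)

noncomputable def augStep (cost : List (Edge n m) → ℕ) (b : Fin n → ℕ)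
    (E' : Finset (Edge n m)) (μ : Finset (Edge n m)) (j : Fin m) : Finset (Edge n m) :=
  match selectPath cost b E' μ j with
  | some p => applyPath μ p
  | none => μ

lemma runAug_eq (cost : List (Edge n m) → ℕ) (b : Fin n → ℕ) (q : Fin m → ℝ)
    (E' : Finset (Edge n m)) :
    runAug cost b q E' = (sortedTasks m q).foldl (augStep cost b E') ∅ := rfl

lemma taskMatched_augStep {cost : List (Edge n m) → ℕ} {b : Fin n → ℕ}
    {E' μ : Finset (Edge n m)} {j' k : Fin m}
    (h : taskMatched μ k) : taskMatched (augStep cost b E' μ j') k := by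
  unfold augStep
  split
  · exact taskMatched_applyPath h
  · exact h

lemma taskMatched_foldl_aug {cost : List (Edge n m) → ℕ} {b : Fin n → ℕ}
    {E' : Finset (Edge n m)} {k : Fin m}
    (L : List (Fin m)) {μ : Finset (Edge n m)} (h : taskMatched μ k) :
    taskMatched (L.foldl (augStep cost b E') μ) k := by
  induction L generalizing μ with
  | nil => exact h
  | cons j' L ih => exact ih (taskMatched_augStep h)

lemma unmatched_augStep {cost : List (Edge n m) → ℕ} {b : Fin n → ℕ}
    {E' μ : Finset (Edge n m)} {j j' : Fin m}
    (hne : j' ≠ j) (hun : ¬ taskMatched μ j) :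
    ¬ taskMatched (augStep cost b E' μ j') j := by
  unfold augStep
  cases hsel : selectPath cost b E' μ j' with
  | none => exact hun
  | some p =>
    have hp := selectPath_some hsel
    rintro ⟨e, he, he2⟩
    rcases Finset.mem_union.mp he with h | h
    · exact hun ⟨e, (Finset.mem_sdiff.mp h).1, he2⟩
    · exact snd_ne_of_mem_path hp hne hun e (List.mem_toFinset.mp h) he2

lemma matched_augStep_self {cost : List (Edge n m) → ℕ} {b : Fin n → ℕ}
    {E' μ : Finset (Edge n m)} {j : Fin m} {p : List (Edge n m)}
    (hsel : selectPath cost b E' μ j = some p) :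
    taskMatched (applyPath μ p) j := by
  have hp := selectPath_some hsel
  have hne := hp.ne
  refine ⟨p.head hne, Finset.mem_union_right _ (List.mem_toFinset.mpr (List.head_mem hne)), ?_⟩
  exact hp.starts _ (List.head?_eq_head hne)

lemma main_aug {cost : List (Edge n m) → ℕ} {b : Fin n → ℕ} {E S : Finset (Edge n m)}
    {j : Fin m} (hS : S ⊆ taskEdges E j) :
    ∀ (L : List (Fin m)) (μ : Finset (Edge n m)), ¬ taskMatched μ j →
      ¬ taskMatched (L.foldl (augStep cost b E) μ) j →
      ¬ taskMatched (L.foldl (augStep cost b (tdeviate E j S)) μ) j := by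
  intro L
  induction L with
  | nil => intro μ h _; exact h
  | cons j' L ih =>
    intro μ hun hE
    simp only [List.foldl_cons] at *
    by_cases hjj : j' = j
    · subst hjj
      cases hsel : selectPath cost b E μ j' with
      | some p =>
        exfalso
        apply hE
        rw [show augStep cost b E μ j' = applyPath μ p from by
          unfold augStep; rw [hsel]]
        exact taskMatched_foldl_aug L (matched_augStep_self hsel)
      | none =>
        have hnoE : ¬ ∃ p, IsAugPathFrom b E μ j' p := fun h =>
          selectPath_ne_none cost b E μ j' h hsel
        have hnoE' : ¬ ∃ p, IsAugPathFrom b (tdeviate E j' S) μ j' p := by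
          rintro ⟨p, hp⟩
          exact hnoE ⟨p, aug_of_aug_tdeviate hS hp⟩
        have h1 : augStep cost b E μ j' = μ := by unfold augStep; rw [hsel]
        have h2 : augStep cost b (tdeviate E j' S) μ j' = μ := by
          unfold augStep; rw [selectPath_eq_none cost b _ μ j' hnoE']
        rw [h2]
        rw [h1] at hE
        exact ih μ hun hE
    · have hsel : selectPath cost b E μ j' = selectPath cost b (tdeviate E j S) μ j' :=
        selectPath_congr cost b (fun p => aug_iff hS hjj hun p)
      have hstep : augStep cost b (tdeviate E j S) μ j' = augStep cost b E μ j' := by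
        unfold augStep; rw [← hsel]
      rw [hstep]
      exact ih _ (unmatched_augStep hjj hun) hE

noncomputable def mapStep (b : Fin n → ℕ) (E' : Finset (Edge n m))
    (μ : Finset (Edge n m)) (j : Fin m) : Finset (Edge n m) :=
  match (List.finRange n).find? (fun i => decide ((i, j) ∈ E' ∧ deg μ i < b i)) with
  | some i => insert (i, j) μ
  | none => μ

lemma MAP_eq (b : Fin n → ℕ) (q : Fin m → ℝ) (E' : Finset (Edge n m)) :
    MAP b q E' = (sortedTasks m q).foldl (mapStep b E') ∅ := rfl

lemma taskMatched_mapStep {b : Fin n → ℕ} {E' μ : Finset (Edge n m)} {j' k : Fin m}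
    (h : taskMatched μ k) : taskMatched (mapStep b E' μ j') k := by
  unfold mapStep
  split
  · obtain ⟨e, he, he2⟩ := h
    exact ⟨e, Finset.mem_insert_of_mem he, he2⟩
  · exact h

lemma taskMatched_foldl_map {b : Fin n → ℕ} {E' : Finset (Edge n m)} {k : Fin m}
    (L : List (Fin m)) {μ : Finset (Edge n m)} (h : taskMatched μ k) :
    taskMatched (L.foldl (mapStep b E') μ) k := by
  induction L generalizing μ with
  | nil => exact h
  | cons j' L ih => exact ih (taskMatched_mapStep h)

lemma unmatched_mapStep {b : Fin n → ℕ} {E' μ : Finset (Edge n m)} {j j' : Fin m}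
    (hne : j' ≠ j) (hun : ¬ taskMatched μ j) :
    ¬ taskMatched (mapStep b E' μ j') j := by
  unfold mapStep
  split
  · rintro ⟨e, he, he2⟩
    rcases Finset.mem_insert.mp he with rfl | h
    · exact hne he2
    · exact hun ⟨e, h, he2⟩
  · exact hun

lemma mapStep_congr {b : Fin n → ℕ} {E S : Finset (Edge n m)} {j j' : Fin m}
    (hS : S ⊆ taskEdges E j) (hne : j' ≠ j) (μ : Finset (Edge n m)) :
    mapStep b (tdeviate E j S) μ j' = mapStep b E μ j' := by
  unfold mapStep
  have hpred : (fun i : Fin n => decide ((i, j') ∈ tdeviate E j S ∧ deg μ i < b i)) =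
      (fun i : Fin n => decide ((i, j') ∈ E ∧ deg μ i < b i)) := by
    funext i
    rw [decide_eq_decide]
    constructor
    · rintro ⟨h1, h2⟩; exact ⟨tdeviate_subset hS h1, h2⟩
    · rintro ⟨h1, h2⟩; exact ⟨mem_tdeviate_of_ne h1 hne, h2⟩
  rw [hpred]

lemma main_map {b : Fin n → ℕ} {E S : Finset (Edge n m)} {j : Fin m}
    (hS : S ⊆ taskEdges E j) :
    ∀ (L : List (Fin m)) (μ : Finset (Edge n m)), ¬ taskMatched μ j →
      ¬ taskMatched (L.foldl (mapStep b E) μ) j →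
      ¬ taskMatched (L.foldl (mapStep b (tdeviate E j S)) μ) j := by
  intro L
  induction L with
  | nil => intro μ h _; exact h
  | cons j' L ih =>
    intro μ hun hE
    simp only [List.foldl_cons] at *
    by_cases hjj : j' = j
    · subst hjj
      cases hfind : (List.finRange n).find? (fun i => decide ((i, j') ∈ E ∧ deg μ i < b i)) with
      | some i =>
        exfalso
        apply hE
        rw [show mapStep b E μ j' = insert (i, j') μ from by
          unfold mapStep; rw [hfind]]
        exact taskMatched_foldl_map L ⟨(i, j'), Finset.mem_insert_self _ _, rfl⟩
      | none =>
        have hfind' : (List.finRange n).find?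
            (fun i => decide ((i, j') ∈ tdeviate E j' S ∧ deg μ i < b i)) = none := by
          rw [List.find?_eq_none] at hfind ⊢
          intro i hi
          simp only [decide_eq_true_eq, not_and] at hfind ⊢
          intro hmem
          exact hfind i hi (tdeviate_subset hS hmem)
        have h1 : mapStep b E μ j' = μ := by unfold mapStep; rw [hfind]
        have h2 : mapStep b (tdeviate E j' S) μ j' = μ := by unfold mapStep; rw [hfind']
        rw [h2]
        rw [h1] at hE
        exact ih μ hun hE
    · rw [mapStep_congr hS hjj μ]
      exact ih _ (unmatched_mapStep hjj hun) hE

lemma not_taskMatched_empty (j : Fin m) : ¬ taskMatched (∅ : Finset (Edge n m)) j := by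
  rintro ⟨e, he, -⟩
  exact absurd he (Finset.notMem_empty e)

end TaskTruthfulAux

/-- When tasks are the strategic entities (each task may hide incident
edges but cannot invent them), the mechanisms `M_BFS`, `M_DFS`, and `M_AP` are all truthful:
a task left unmatched when reporting its full incident edge set remains unmatched under any
nonempty subset report, the other tasks' reports being fixed. -/
theorem task_manipulation_truthful (n m : ℕ) (b : Fin n → ℕ) (q : Fin m → ℝ)
    (hq : ∀ j, 0 < q j) (E : Finset (Edge n m)) (j : Fin m) (S : Finset (Edge n m))
    (hSsub : S ⊆ taskEdges E j) (hSne : S.Nonempty) :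
    (¬ taskMatched (MBFS b q E) j → ¬ taskMatched (MBFS b q (tdeviate E j S)) j) ∧
    (¬ taskMatched (MDFS b q E) j → ¬ taskMatched (MDFS b q (tdeviate E j S)) j) ∧
    (¬ taskMatched (MAP b q E) j → ¬ taskMatched (MAP b q (tdeviate E j S)) j) := by
  refine ⟨?_, ?_, ?_⟩
  · intro hE
    rw [MBFS, TaskTruthfulAux.runAug_eq] at hE ⊢
    exact TaskTruthfulAux.main_aug hSsub _ ∅ (TaskTruthfulAux.not_taskMatched_empty j) hE
  · intro hE
    rw [MDFS, TaskTruthfulAux.runAug_eq] at hE ⊢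
    exact TaskTruthfulAux.main_aug hSsub _ ∅ (TaskTruthfulAux.not_taskMatched_empty j) hE
  · intro hE
    rw [TaskTruthfulAux.MAP_eq] at hE ⊢
    exact TaskTruthfulAux.main_map hSsub _ ∅ (TaskTruthfulAux.not_taskMatched_empty j) hE
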